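/- arXiv:1102.1341 — 6 statements merged into one kernel-verified Lean document; each statement's English description precedes it below -/
import Mathlib

section
/- Let ≤ be a partial order on the finite player set N and let the set system be F = O(N), the collection of all downsets of (N, ≤). Then a nonzero vector r ∈ ℝ^N generates an extremal ray of the recession cone C(0) if and only if r is a positive scalar multiple of (1_j, −1_i) for some i, j ∈ N with j ≺ i (j covered by i). -/
open Finset

variable {ι : Type*}

/-- `S` is a downset (lower set) of the poset `ι`. -/
def IsDownset [PartialOrder ι] (S : Finset ι) : Prop :=
  ∀ ⦃i⦄, i ∈ S → ∀ ⦃j⦄, j ≤ i → j ∈ S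

/-- The recession cone `C(0)` of the core, for the set system `F`:
`{x : x(S) ≥ 0 for all S ∈ F, x(N) = 0}`. -/
def recCone [Fintype ι] (F : Set (Finset ι)) : Set (ι → ℝ) :=
  {x | (∀ S ∈ F, 0 ≤ ∑ k ∈ S, x k) ∧ ∑ k, x k = 0}

/-- The vector `(1_j, -1_i)` : `1` at coordinate `j`, `-1` at coordinate `i`, `0` elsewhere. -/
def unitDiff [DecidableEq ι] (j i : ι) : ι → ℝ :=
  fun k => if k = j then 1 else if k = i then -1 else 0

/-- A nonzero `r ∈ C(0)` generates an extremal ray of `C(0)` if whenever `r = y + z` with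
`y, z ∈ C(0)`, both `y` and `z` are nonnegative scalar multiples of `r`. -/
def IsExtremalRay [Fintype ι] (F : Set (Finset ι)) (r : ι → ℝ) : Prop :=
  r ≠ 0 ∧ r ∈ recCone F ∧
    ∀ y ∈ recCone F, ∀ z ∈ recCone F, r = y + z →
      (∃ a : ℝ, 0 ≤ a ∧ y = a • r) ∧ ∃ b : ℝ, 0 ≤ b ∧ z = b • r

section Aux

variable [Fintype ι] [DecidableEq ι] [PartialOrder ι]

open scoped Classical

lemma aux_sum_unitDiff (j i : ι) (hji : j ≠ i) (S : Finset ι) :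
    ∑ k ∈ S, unitDiff j i k
      = (if j ∈ S then (1 : ℝ) else 0) - (if i ∈ S then (1 : ℝ) else 0) := by
  have h : ∀ k, unitDiff j i k
      = (if k = j then (1 : ℝ) else 0) - (if k = i then (1 : ℝ) else 0) := by
    intro k
    unfold unitDiff
    by_cases h1 : k = j
    · subst h1; simp [hji]
    · by_cases h2 : k = i <;> simp [h1, h2, Ne.symm hji]
  simp only [h, Finset.sum_sub_distrib]
  rw [Finset.sum_ite_eq' S j (fun _ => (1:ℝ)), Finset.sum_ite_eq' S i (fun _ => (1:ℝ))]

lemma aux_downset_univ : IsDownset (univ : Finset ι) := by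
  intro a _ b _; exact mem_univ b

lemma aux_downset_inter {S T : Finset ι} (hS : IsDownset S) (hT : IsDownset T) :
    IsDownset (S ∩ T) := by
  intro a ha b hba
  rw [mem_inter] at ha ⊢
  exact ⟨hS ha.1 hba, hT ha.2 hba⟩

lemma aux_downset_union {S T : Finset ι} (hS : IsDownset S) (hT : IsDownset T) :
    IsDownset (S ∪ T) := by
  intro a ha b hba
  rw [mem_union] at ha ⊢
  rcases ha with h | h
  · exact Or.inl (hS h hba)
  · exact Or.inr (hT h hba)

lemma aux_downset_le (k : ι) : IsDownset (univ.filter (fun m => m ≤ k)) := by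
  intro a ha b hba
  simp only [mem_filter, mem_univ, true_and] at ha ⊢
  exact hba.trans ha

lemma aux_downset_lt (k : ι) : IsDownset (univ.filter (fun m => m < k)) := by
  intro a ha b hba
  simp only [mem_filter, mem_univ, true_and] at ha ⊢
  exact lt_of_le_of_lt hba ha

lemma aux_le_eq_insert_lt (k : ι) :
    univ.filter (fun m => m ≤ k) = insert k (univ.filter (fun m => m < k)) := by
  ext m
  simp only [mem_filter, mem_univ, true_and, mem_insert]
  constructor
  · intro h
    rcases lt_or_eq_of_le h with h' | h'
    · exact Or.inr h'
    · exact Or.inl h'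
  · rintro (rfl | h)
    · exact le_refl _
    · exact h.le

lemma aux_coord (x : ι → ℝ) (k : ι) :
    x k = (∑ m ∈ univ.filter (fun m => m ≤ k), x m)
        - (∑ m ∈ univ.filter (fun m => m < k), x m) := by
  rw [aux_le_eq_insert_lt k, Finset.sum_insert (by simp)]
  ring

lemma aux_smul_unitDiff_mem (j i : ι) (hlt : j < i) (c : ℝ) (hc : 0 ≤ c) :
    c • unitDiff j i ∈ recCone {S : Finset ι | IsDownset S} := by
  have hsum : ∀ S : Finset ι, ∑ k ∈ S, (c • unitDiff j i) k
      = c * ((if j ∈ S then (1 : ℝ) else 0) - (if i ∈ S then (1 : ℝ) else 0)) := by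
    intro S
    rw [← aux_sum_unitDiff j i hlt.ne S, Finset.mul_sum]
    rfl
  constructor
  · intro S hS
    rw [hsum S]
    by_cases hiS : i ∈ S
    · have hjS : j ∈ S := hS hiS hlt.le
      simp [hjS, hiS]
    · by_cases hjS : j ∈ S
      · simp only [hjS, hiS, if_true, if_false, sub_zero, mul_one]; exact hc
      · simp [hjS, hiS]
  · rw [hsum univ]
    simp

/-- Key lemma for the "if" direction: if `c • unitDiff j i = y + z` with `y, z` in the
recession cone and `j ⋖ i`, then `y` is a nonnegative multiple of `c • unitDiff j i`. -/
lemma aux_half (j i : ι) (hcov : j ⋖ i) (c : ℝ) (hc : 0 < c)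
    (y z : ι → ℝ) (hy : y ∈ recCone {S : Finset ι | IsDownset S})
    (hz : z ∈ recCone {S : Finset ι | IsDownset S})
    (hsum : c • unitDiff j i = y + z) :
    ∃ a : ℝ, 0 ≤ a ∧ y = a • (c • unitDiff j i) := by
  have hji : j ≠ i := hcov.ne
  have hlt : j < i := hcov.lt
  -- null downsets
  have hnull : ∀ S : Finset ι, IsDownset S → (j ∈ S → i ∈ S) → ∑ k ∈ S, y k = 0 := by
    intro S hS hSji
    have h1 : 0 ≤ ∑ k ∈ S, y k := hy.1 S hS
    have h2 : 0 ≤ ∑ k ∈ S, z k := hz.1 S hS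
    have h3 : (∑ k ∈ S, y k) + ∑ k ∈ S, z k = ∑ k ∈ S, (c • unitDiff j i) k := by
      rw [hsum, ← Finset.sum_add_distrib]
      rfl
    have h4 : ∑ k ∈ S, (c • unitDiff j i) k = 0 := by
      have hs : ∑ k ∈ S, (c • unitDiff j i) k = c * ∑ k ∈ S, unitDiff j i k := by
        rw [Finset.mul_sum]; rfl
      rw [hs, aux_sum_unitDiff j i hji S]
      by_cases hjS : j ∈ S
      · have hiS : i ∈ S := hSji hjS
        simp [hjS, hiS]
      · have hiS : i ∉ S := fun h => hjS (hS h hlt.le)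
        simp [hjS, hiS]
    linarith
  -- the "cut at i" lemma
  have hL : ∀ T : Finset ι, IsDownset T → i ∉ T →
      ∑ k ∈ T, y k = ∑ k ∈ T ∩ univ.filter (fun m => m < i), y k := by
    intro T hT hiT
    have h1 : ∑ k ∈ univ.filter (fun m => m ≤ i), y k = 0 :=
      hnull _ (aux_downset_le i) (fun _ => by simp)
    have h2 : ∑ k ∈ T ∪ univ.filter (fun m => m ≤ i), y k = 0 := by
      refine hnull _ (aux_downset_union hT (aux_downset_le i)) (fun _ => ?_)
      simp
    have h3 := Finset.sum_union_inter (s₁ := T) (s₂ := univ.filter (fun m => m ≤ i)) (f := y)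
    have h4 : ∑ k ∈ T, y k = ∑ k ∈ T ∩ univ.filter (fun m => m ≤ i), y k := by linarith
    have h5 : T ∩ univ.filter (fun m => m ≤ i) = T ∩ univ.filter (fun m => m < i) := by
      ext m
      simp only [mem_inter, mem_filter, mem_univ, true_and, and_congr_right_iff]
      intro hmT
      constructor
      · intro h
        rcases lt_or_eq_of_le h with h' | h'
        · exact h'
        · exact absurd (h' ▸ hmT) hiT
      · exact fun h => h.le
    rw [h4, h5]
  -- coordinates away from i, j vanish
  have hy0 : ∀ k : ι, k ≠ j → k ≠ i → y k = 0 := by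
    intro k hkj hki
    rw [aux_coord y k]
    by_cases hjk : j ≤ k
    · have hjk' : j < k := lt_of_le_of_ne hjk (Ne.symm hkj)
      by_cases hik : i ≤ k
      · have hik' : i < k := lt_of_le_of_ne hik (Ne.symm hki)
        have n1 : ∑ m ∈ univ.filter (fun m => m ≤ k), y m = 0 :=
          hnull _ (aux_downset_le k) (fun _ => by simp [hik])
        have n2 : ∑ m ∈ univ.filter (fun m => m < k), y m = 0 :=
          hnull _ (aux_downset_lt k) (fun _ => by simp [hik'])
        rw [n1, n2]; ring
      · have hiDk : i ∉ univ.filter (fun m => m ≤ k) := by simp [hik]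
        have hiD'k : i ∉ univ.filter (fun m => m < k) := by
          simp only [mem_filter, mem_univ, true_and]
          exact fun h => hik h.le
        have e1 := hL _ (aux_downset_le k) hiDk
        have e2 := hL _ (aux_downset_lt k) hiD'k
        have e3 : univ.filter (fun m => m ≤ k) ∩ univ.filter (fun m => m < i)
            = univ.filter (fun m => m < k) ∩ univ.filter (fun m => m < i) := by
          ext m
          simp only [mem_inter, mem_filter, mem_univ, true_and]
          constructor
          · rintro ⟨h1, h2⟩
            refine ⟨lt_of_le_of_ne h1 ?_, h2⟩
            rintro rfl
            exact hcov.2 hjk' h2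
          · rintro ⟨h1, h2⟩
            exact ⟨h1.le, h2⟩
        rw [e1, e2, e3]
        ring
    · have n1 : ∑ m ∈ univ.filter (fun m => m ≤ k), y m = 0 := by
        refine hnull _ (aux_downset_le k) (fun h => absurd ?_ hjk)
        simpa using h
      have n2 : ∑ m ∈ univ.filter (fun m => m < k), y m = 0 := by
        refine hnull _ (aux_downset_lt k) (fun h => absurd ?_ hjk)
        have : j < k := by simpa using h
        exact this.le
      rw [n1, n2]; ring
  -- y j is nonnegative
  have hyjnn : 0 ≤ y j := by
    have n2 : ∑ m ∈ univ.filter (fun m => m < j), y m = 0 := by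
      refine hnull _ (aux_downset_lt j) (fun h => absurd ?_ (lt_irrefl j))
      simpa using h
    have h1 : 0 ≤ ∑ m ∈ univ.filter (fun m => m ≤ j), y m := hy.1 _ (aux_downset_le j)
    rw [aux_coord y j, n2]
    linarith
  -- y i = - y j
  have hyi : y i = - y j := by
    have htot : ∑ k, y k = 0 := hy.2
    have hsub : ({i, j} : Finset ι) ⊆ univ := subset_univ _
    have hz0 : ∀ x ∈ (univ : Finset ι), x ∉ ({i, j} : Finset ι) → y x = 0 := by
      intro x _ hx
      simp only [mem_insert, mem_singleton, not_or] at hx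
      exact hy0 x hx.2 hx.1
    have := Finset.sum_subset hsub hz0
    rw [htot] at this
    rw [Finset.sum_pair (Ne.symm hji)] at this
    linarith
  refine ⟨y j / c, div_nonneg hyjnn hc.le, ?_⟩
  funext k
  simp only [Pi.smul_apply, smul_eq_mul, unitDiff]
  by_cases hkj : k = j
  · subst hkj
    simp only [if_pos rfl, if_true]
    field_simp
  · by_cases hki : k = i
    · subst hki
      simp only [if_neg hkj, if_pos rfl, hyi, if_true]
      field_simp
    · rw [hy0 k hkj hki]
      simp [hkj, hki]

lemma aux_inf'_closed {Q : Finset ι → Prop}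
    (hinter : ∀ S T, Q S → Q T → Q (S ∩ T)) :
    ∀ (SS : Finset (Finset ι)) (hne : SS.Nonempty), (∀ S ∈ SS, Q S) → Q (SS.inf' hne id) := by
  intro SS
  induction SS using Finset.cons_induction with
  | empty => intro hne; exact absurd hne (by simp)
  | cons a s ha ih =>
    intro hne h
    rcases s.eq_empty_or_nonempty with rfl | hs
    · simpa using h a (by simp)
    · have h1 : Q a := h a (by simp)
      have h2 : Q (s.inf' hs id) := ih hs (fun S hS => h S (by simp [hS]))
      have hrw : (Finset.cons a s ha).inf' hne id = a ∩ s.inf' hs id := Finset.inf'_cons hs id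
      rw [hrw]
      exact hinter _ _ h1 h2

/-- Existence of a minimal downset with positive sum. -/
lemma aux_exists_min (r : ι → ℝ)
    (hpos : ∃ T : Finset ι, IsDownset T ∧ 0 < ∑ k ∈ T, r k)
    (hnn : ∀ S : Finset ι, IsDownset S → 0 ≤ ∑ k ∈ S, r k) :
    ∃ T : Finset ι, IsDownset T ∧ 0 < ∑ k ∈ T, r k ∧
      ∀ S : Finset ι, IsDownset S → S ⊂ T → ∑ k ∈ S, r k = 0 := by
  obtain ⟨T, hTd, hTp⟩ := hpos
  have key : ∀ n (T : Finset ι), T.card ≤ n → IsDownset T → 0 < ∑ k ∈ T, r k →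
      ∃ T' : Finset ι, IsDownset T' ∧ 0 < ∑ k ∈ T', r k ∧
        ∀ S : Finset ι, IsDownset S → S ⊂ T' → ∑ k ∈ S, r k = 0 := by
    intro n
    induction n with
    | zero =>
      intro T hcard hTd hTp
      have : T = ∅ := Finset.card_eq_zero.1 (Nat.le_zero.1 hcard)
      rw [this] at hTp
      simp at hTp
    | succ n ih =>
      intro T hcard hTd hTp
      by_cases hmin : ∀ S : Finset ι, IsDownset S → S ⊂ T → ∑ k ∈ S, r k = 0
      · exact ⟨T, hTd, hTp, hmin⟩
      · push_neg at hmin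
        obtain ⟨S, hSd, hSsub, hSne⟩ := hmin
        have hSp : 0 < ∑ k ∈ S, r k := lt_of_le_of_ne (hnn S hSd) (Ne.symm hSne)
        have hScard : S.card ≤ n := by
          have := Finset.card_lt_card hSsub
          omega
        exact ih S hScard hSd hSp
  exact key T.card T le_rfl hTd hTp

end Aux

/-- for the set system `O(N)` of all downsets of the finite poset `N`,
a nonzero vector `r` generates an extremal ray of `C(0)` iff `r` is a positive scalar
multiple of `(1_j, -1_i)` for some `i, j` with `j ≺ i` (`j` covered by `i`). -/
theorem extremalRay_iff_unitDiff_of_covBy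
    [Fintype ι] [DecidableEq ι] [PartialOrder ι] (r : ι → ℝ) (hr : r ≠ 0) :
    IsExtremalRay {S : Finset ι | IsDownset S} r ↔
      ∃ i j : ι, j ⋖ i ∧ ∃ c : ℝ, 0 < c ∧ r = c • unitDiff j i := by
  classical
  constructor
  · rintro ⟨hrne, hrC, hext⟩
    have hmono : ∀ S : Finset ι, IsDownset S → 0 ≤ ∑ k ∈ S, r k := fun S hS => hrC.1 S hS
    -- union of two null downsets is null
    have hnullUnion : ∀ S T : Finset ι, IsDownset S → IsDownset T →
        (∑ k ∈ S, r k) = 0 → (∑ k ∈ T, r k) = 0 → (∑ k ∈ S ∪ T, r k) = 0 := by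
      intro S T hSd hTd hS0 hT0
      have h1 := Finset.sum_union_inter (s₁ := S) (s₂ := T) (f := r)
      have h2 : 0 ≤ ∑ k ∈ S ∪ T, r k := hmono _ (aux_downset_union hSd hTd)
      have h3 : 0 ≤ ∑ k ∈ S ∩ T, r k := hmono _ (aux_downset_inter hSd hTd)
      linarith
    -- there is a non-null downset
    have hexpos : ∃ T : Finset ι, IsDownset T ∧ 0 < ∑ k ∈ T, r k := by
      by_contra hcon
      push_neg at hcon
      apply hrne
      funext k
      have h1 : ∑ m ∈ univ.filter (fun m => m ≤ k), r m = 0 :=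
        le_antisymm (hcon _ (aux_downset_le k)) (hmono _ (aux_downset_le k))
      have h2 : ∑ m ∈ univ.filter (fun m => m < k), r m = 0 :=
        le_antisymm (hcon _ (aux_downset_lt k)) (hmono _ (aux_downset_lt k))
      rw [aux_coord r k, h1, h2]
      simp
    obtain ⟨T, hTd, hTp, hTmin⟩ := aux_exists_min r hexpos hmono
    -- maximal element j of T
    have hTne : T.Nonempty := by
      rcases Finset.eq_empty_or_nonempty T with h | h
      · rw [h] at hTp; simp at hTp
      · exact h
    obtain ⟨j, hjT, hjmax⟩ : ∃ j ∈ T, ∀ x ∈ T, ¬ j < x := by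
      obtain ⟨j, hj⟩ := Finset.exists_maximal hTne
      exact ⟨j, hj.1, fun x hx hlt => absurd hlt (not_lt_of_ge (show x ≤ j from hj.2 hx hlt.le))⟩
    have hTjd : IsDownset (T.erase j) := by
      intro a ha b hba
      rw [mem_erase] at ha ⊢
      refine ⟨?_, hTd ha.2 hba⟩
      rintro rfl
      exact hjmax a ha.2 (lt_of_le_of_ne hba (Ne.symm ha.1))
    have hTjnull : ∑ k ∈ T.erase j, r k = 0 :=
      hTmin _ hTjd (Finset.erase_ssubset hjT)
    have hrj : 0 < r j := by
      have := Finset.sum_erase_add T r hjT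
      rw [hTjnull] at this
      linarith
    -- the minimal null downset P containing j
    set SS : Finset (Finset ι) :=
      univ.filter (fun S => IsDownset S ∧ (∑ k ∈ S, r k) = 0 ∧ j ∈ S) with hSSdef
    have hSSmem : ∀ S : Finset ι,
        S ∈ SS ↔ IsDownset S ∧ (∑ k ∈ S, r k) = 0 ∧ j ∈ S := by
      intro S; simp [hSSdef]
    have hSSne : SS.Nonempty :=
      ⟨univ, (hSSmem univ).2 ⟨aux_downset_univ, hrC.2, mem_univ j⟩⟩
    set P : Finset ι := SS.inf' hSSne id with hPdef
    have hPle : ∀ S ∈ SS, P ⊆ S := fun S hS => Finset.inf'_le id hS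
    have hPprop : IsDownset P ∧ (∑ k ∈ P, r k) = 0 ∧ j ∈ P := by
      refine aux_inf'_closed ?_ SS hSSne (fun S hS => (hSSmem S).1 hS)
      intro S U hS hU
      refine ⟨aux_downset_inter hS.1 hU.1, ?_, Finset.mem_inter.2 ⟨hS.2.2, hU.2.2⟩⟩
      have h1 := Finset.sum_union_inter (s₁ := S) (s₂ := U) (f := r)
      have h2 : (∑ k ∈ S ∪ U, r k) = 0 := hnullUnion S U hS.1 hU.1 hS.2.1 hU.2.1
      linarith
    -- T ⊆ P
    have hTP : T ⊆ P := by
      have hTS : ∀ S ∈ SS, T ⊆ S := by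
        intro S hS
        obtain ⟨hSd, hSnull, hjS⟩ := (hSSmem S).1 hS
        by_contra hns
        have hsub : S ∩ T ⊆ T := Finset.inter_subset_right
        have hne' : S ∩ T ≠ T := by
          intro h
          apply hns
          intro x hx
          have : x ∈ S ∩ T := by rw [h]; exact hx
          exact (Finset.mem_inter.1 this).1
        have hss : S ∩ T ⊂ T := ssubset_of_subset_of_ne hsub hne'
        have h1 : ∑ k ∈ S ∩ T, r k = 0 := hTmin _ (aux_downset_inter hSd hTd) hss
        have h2 : (S ∩ T) ∪ T.erase j = T := by
          ext x
          simp only [mem_union, mem_inter, mem_erase]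
          constructor
          · rintro (⟨_, h⟩ | ⟨_, h⟩) <;> exact h
          · intro hx
            by_cases hxj : x = j
            · exact Or.inl ⟨hxj ▸ hjS, hx⟩
            · exact Or.inr ⟨hxj, hx⟩
        have h3 := hnullUnion _ _ (aux_downset_inter hSd hTd) hTjd h1 hTjnull
        rw [h2] at h3
        linarith
      exact (Finset.le_inf' hSSne id hTS : T ≤ P)
    have hjP : j ∈ P := hPprop.2.2
    -- there is an element of P strictly above j
    have hex : ∃ x ∈ P, j < x := by
      by_contra hcon
      push_neg at hcon
      have herased : IsDownset (P.erase j) := by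
        intro a ha b hba
        rw [mem_erase] at ha ⊢
        refine ⟨?_, hPprop.1 ha.2 hba⟩
        rintro rfl
        exact absurd (lt_of_le_of_ne hba (Ne.symm ha.1)) (by exact fun h => (hcon a ha.2 h))
      have hnn0 : 0 ≤ ∑ k ∈ P.erase j, r k := hmono _ herased
      have := Finset.sum_erase_add P r hjP
      rw [hPprop.2.1] at this
      linarith
    obtain ⟨x, hxP, hjx⟩ := hex
    -- minimal element i of P strictly above j
    have hPupne : (P.filter (fun m => j < m)).Nonempty :=
      ⟨x, Finset.mem_filter.2 ⟨hxP, hjx⟩⟩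
    obtain ⟨i, hiPup, himin⟩ : ∃ i ∈ P.filter (fun m => j < m), ∀ x ∈ P.filter (fun m => j < m), ¬ x < i := by
      obtain ⟨i, hi⟩ := Finset.exists_minimal hPupne
      exact ⟨i, hi.1, fun x hx hlt => absurd hlt (not_lt_of_ge (show i ≤ x from hi.2 hx hlt.le))⟩
    obtain ⟨hiP, hji⟩ := Finset.mem_filter.1 hiPup
    have hcov : j ⋖ i := by
      refine ⟨hji, fun m hjm hmi => ?_⟩
      exact himin m (Finset.mem_filter.2 ⟨hPprop.1 hiP hmi.le, hjm⟩) hmi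
    -- every downset containing j but not i has positive sum
    have hsep : ∀ S : Finset ι, IsDownset S → j ∈ S → i ∉ S → 0 < ∑ k ∈ S, r k := by
      intro S hS hjS hiS
      rcases (hmono S hS).lt_or_eq with h | h
      · exact h
      · exfalso
        have : S ∈ SS := (hSSmem S).2 ⟨hS, h.symm, hjS⟩
        exact hiS (hPle S this hiP)
    -- the positive threshold ε
    set TT : Finset (Finset ι) :=
      univ.filter (fun S => IsDownset S ∧ j ∈ S ∧ i ∉ S) with hTTdef
    have hTTmem : ∀ S : Finset ι, S ∈ TT ↔ IsDownset S ∧ j ∈ S ∧ i ∉ S := by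
      intro S; simp [hTTdef]
    have hTTne : TT.Nonempty := by
      refine ⟨univ.filter (fun m => m ≤ j), (hTTmem _).2 ⟨aux_downset_le j, ?_, ?_⟩⟩
      · simp
      · simp only [mem_filter, mem_univ, true_and]
        exact fun h => absurd (lt_of_le_of_lt h hji) (lt_irrefl i)
    set ε : ℝ := TT.inf' hTTne (fun S => ∑ k ∈ S, r k) with hεdef
    have hεpos : 0 < ε := by
      rw [hεdef, Finset.lt_inf'_iff]
      intro S hS
      obtain ⟨h1, h2, h3⟩ := (hTTmem S).1 hS
      exact hsep S h1 h2 h3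
    -- the decomposition
    have hyC : ε • unitDiff j i ∈ recCone {S : Finset ι | IsDownset S} :=
      aux_smul_unitDiff_mem j i hji ε hεpos.le
    have huform : ∀ S : Finset ι, ∑ k ∈ S, (ε • unitDiff j i) k
        = ε * ((if j ∈ S then (1 : ℝ) else 0) - (if i ∈ S then (1 : ℝ) else 0)) := by
      intro S
      rw [← aux_sum_unitDiff j i hji.ne S, Finset.mul_sum]
      rfl
    have hzC : r - ε • unitDiff j i ∈ recCone {S : Finset ι | IsDownset S} := by
      constructor
      · intro S hS
        have hd : IsDownset S := hS
        have hsplit : ∑ k ∈ S, (r - ε • unitDiff j i) k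
            = (∑ k ∈ S, r k) - ∑ k ∈ S, (ε • unitDiff j i) k := by
          rw [← Finset.sum_sub_distrib]
          rfl
        rw [hsplit, huform S]
        by_cases hiS : i ∈ S
        · have hjS : j ∈ S := hd hiS hji.le
          simp only [hjS, hiS, if_true, sub_self, mul_zero, sub_zero]
          exact hmono S hd
        · by_cases hjS : j ∈ S
          · simp only [hjS, hiS, if_true, if_false, sub_zero, mul_one]
            have hmem : S ∈ TT := (hTTmem S).2 ⟨hd, hjS, hiS⟩
            have := Finset.inf'_le (fun S => ∑ k ∈ S, r k) hmem
            rw [← hεdef] at this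
            linarith
          · simp only [hjS, hiS, if_false, sub_self, mul_zero, sub_zero]
            exact hmono S hd
      · have hsplit : ∑ k, (r - ε • unitDiff j i) k
            = (∑ k, r k) - ∑ k, (ε • unitDiff j i) k := by
          rw [← Finset.sum_sub_distrib]
          rfl
        rw [hsplit, hrC.2, hyC.2]
        ring
    obtain ⟨⟨a, ha, hya⟩, -⟩ := hext _ hyC _ hzC (by ring)
    have hane : a ≠ 0 := by
      rintro rfl
      have := congrFun hya j
      simp only [Pi.smul_apply, smul_eq_mul, zero_mul, zero_smul, Pi.zero_apply] at this
      rw [unitDiff] at this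
      simp at this
      exact absurd this (ne_of_gt hεpos)
    have hapos : 0 < a := lt_of_le_of_ne ha (Ne.symm hane)
    refine ⟨i, j, hcov, ε / a, div_pos hεpos hapos, ?_⟩
    funext k
    have hk := congrFun hya k
    simp only [Pi.smul_apply, smul_eq_mul] at hk ⊢
    field_simp
    linarith [hk]
  · rintro ⟨i, j, hcov, c, hc, rfl⟩
    refine ⟨hr, aux_smul_unitDiff_mem j i hcov.lt c hc.le, ?_⟩
    intro y hy z hz hsum
    exact ⟨aux_half j i hcov c hc y z hy hz hsum,
      aux_half j i hcov c hc z y hz hy (by rw [hsum, add_comm])⟩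
end

section
/- Let ≤ be a partial order on the finite player set N with height h(N), and let F = O(N) be its downsets. If K_1, …, K_m ∈ O(N) ∖ {N} are downsets such that the restricted recession cone {x ∈ ℝ^N : x(S) ≥ 0 for all S ∈ O(N), x(N) = 0, and x(K_t) = 0 for t = 1, …, m} equals {0}, then m ≥ h(N). (The minimum number of additional equalities needed to make the core bounded is h(N).) -/
open Finset

variable {ι : Type*}

/-- The height `h(N)` of the poset: the maximal length (number of elements minus one)
of a chain in the poset. -/
noncomputable def posetHeight (ι : Type*) [PartialOrder ι] : ℕ :=
  sSup {n | ∃ c : Fin (n + 1) → ι, StrictMono c}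

/-- if the downsets `K ∈ 𝒩` (all ≠ `N`) are such that the restricted recession
cone `{x : x(S) ≥ 0 ∀ S ∈ O(N), x(N) = 0, x(K) = 0 ∀ K ∈ 𝒩}` equals `{0}`,
then `𝒩` has at least `h(N)` members. -/
theorem normalCollection_card_ge_height
    [Fintype ι] [PartialOrder ι] (𝒩 : Finset (Finset ι))
    (h𝒩 : ∀ K ∈ 𝒩, IsDownset K ∧ K ≠ Finset.univ)
    (hkill : {x : ι → ℝ | (∀ S : Finset ι, IsDownset S → 0 ≤ ∑ a ∈ S, x a) ∧
        (∑ a, x a) = 0 ∧ ∀ K ∈ 𝒩, ∑ a ∈ K, x a = 0} = {0}) :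
    posetHeight ι ≤ 𝒩.card := by
  classical
  apply csSup_le'
  rintro n ⟨c, hc⟩
  -- Key claim: each consecutive pair of the chain is separated by some K ∈ 𝒩.
  have key : ∀ k : Fin n, ∃ K ∈ 𝒩, c k.castSucc ∈ K ∧ c k.succ ∉ K := by
    intro k
    by_contra hbad
    push_neg at hbad
    have hne : c k.castSucc ≠ c k.succ := ne_of_lt (hc ((Fin.castSucc_lt_succ : k.castSucc < k.succ)))
    set x : ι → ℝ := fun a =>
      (if a = c k.castSucc then (1 : ℝ) else 0) - (if a = c k.succ then 1 else 0) with hx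
    have hsum : ∀ S : Finset ι, ∑ a ∈ S, x a =
        (if c k.castSucc ∈ S then (1:ℝ) else 0) - (if c k.succ ∈ S then 1 else 0) := by
      intro S
      simp [hx, Finset.sum_sub_distrib, Finset.sum_ite_eq']
    have hmem : x ∈ {x : ι → ℝ | (∀ S : Finset ι, IsDownset S → 0 ≤ ∑ a ∈ S, x a) ∧
        (∑ a, x a) = 0 ∧ ∀ K ∈ 𝒩, ∑ a ∈ K, x a = 0} := by
      refine ⟨?_, ?_, ?_⟩
      · intro S hS
        rw [hsum]
        by_cases h2 : c k.succ ∈ S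
        · have h1 : c k.castSucc ∈ S := hS h2 (le_of_lt (hc ((Fin.castSucc_lt_succ : k.castSucc < k.succ))))
          simp [h1, h2]
        · by_cases h1 : c k.castSucc ∈ S <;> simp [h1, h2]
      · rw [hsum]; simp
      · intro K hK
        rw [hsum]
        by_cases h1 : c k.castSucc ∈ K
        · have h2 : c k.succ ∈ K := hbad K hK h1
          simp [h1, h2]
        · have h2 : c k.succ ∉ K := fun h2 =>
            h1 ((h𝒩 K hK).1 h2 (le_of_lt (hc ((Fin.castSucc_lt_succ : k.castSucc < k.succ)))))
          simp [h1, h2]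
    rw [hkill] at hmem
    have : x (c k.castSucc) = 0 := by rw [hmem]; rfl
    rw [hx] at this
    simp [hne] at this
  -- Choose such a K for each k; the assignment is injective.
  choose f hf hf1 hf2 using key
  have hinj : Function.Injective f := by
    intro k k' hkk'
    by_contra hne
    rcases lt_or_gt_of_ne (fun h : k = k' => hne h) with h | h
    · -- k < k' : c k.succ ≤ c k'.castSucc ∈ f k' = f k, so c k.succ ∈ f k, contra
      have hle : k.succ ≤ k'.castSucc := Fin.succ_le_castSucc_iff.mpr h
      exact hf2 k ((h𝒩 (f k) (hf k)).1 (hkk' ▸ hf1 k') (hc.monotone hle))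
    · have hle : k'.succ ≤ k.castSucc := Fin.succ_le_castSucc_iff.mpr h
      exact hf2 k' ((h𝒩 (f k') (hf k')).1 (hkk' ▸ hf1 k) (hc.monotone hle))
  have hcard := Fintype.card_le_of_injective (fun k : Fin n => (⟨f k, hf k⟩ : {K // K ∈ 𝒩}))
    (fun a b hab => hinj (congrArg Subtype.val hab))
  simpa using hcard
end

section
/- Let ≤ be a partial order on the finite player set N with height q := h(N) ≥ 1, and for k = 1, …, q set D_k = {i ∈ N : h(i) ≤ k − 1}. Then each D_k is a downset, D_1 ⊊ D_2 ⊊ ⋯ ⊊ D_q ⊊ N, and {x ∈ ℝ^N : x(S) ≥ 0 for all S ∈ O(N), x(N) = 0, and x(D_k) = 0 for k = 1, …, q} = {0}. In particular, there exists a nested normal collection of downsets of cardinality exactly h(N). -/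
open Finset

variable {ι : Type*}

/-- The height `h(i)` of an element `i`: the maximal length of a chain ending at `i`
(in a finite poset this is the maximal length of a chain from a minimal element to `i`). -/
noncomputable def heightOf [PartialOrder ι] (i : ι) : ℕ :=
  sSup {n | ∃ c : Fin (n + 1) → ι, StrictMono c ∧ c (Fin.last n) = i}

set_option linter.unusedSectionVars false

section Aux
variable [Fintype ι] [PartialOrder ι]

lemma heightSet_bdd (i : ι) :
    BddAbove {n | ∃ c : Fin (n + 1) → ι, StrictMono c ∧ c (Fin.last n) = i} := by
  refine ⟨Fintype.card ι, ?_⟩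
  rintro n ⟨c, hc, -⟩
  have := Fintype.card_le_of_injective c hc.injective
  simp only [Fintype.card_fin] at this; omega

lemma posetSet_bdd : BddAbove {n | ∃ c : Fin (n + 1) → ι, StrictMono c} := by
  refine ⟨Fintype.card ι, ?_⟩
  rintro n ⟨c, hc⟩
  have := Fintype.card_le_of_injective c hc.injective
  simp only [Fintype.card_fin] at this; omega

lemma heightSet_nonempty (i : ι) :
    {n | ∃ c : Fin (n + 1) → ι, StrictMono c ∧ c (Fin.last n) = i}.Nonempty := by
  refine ⟨0, fun _ => i, fun a b hab => absurd hab ?_, rfl⟩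
  rw [Fin.lt_def]
  have := a.isLt
  have := b.isLt
  omega

lemma heightOf_mem (i : ι) :
    ∃ c : Fin (heightOf i + 1) → ι, StrictMono c ∧ c (Fin.last _) = i :=
  Nat.sSup_mem (heightSet_nonempty i) (heightSet_bdd i)

lemma le_heightOf {n : ℕ} {i : ι} (c : Fin (n + 1) → ι) (hc : StrictMono c)
    (hci : c (Fin.last n) = i) : n ≤ heightOf i :=
  le_csSup (heightSet_bdd i) ⟨c, hc, hci⟩

lemma heightOf_le_posetHeight (i : ι) : heightOf i ≤ posetHeight ι := by
  obtain ⟨c, hc, -⟩ := heightOf_mem i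
  exact le_csSup posetSet_bdd ⟨c, hc⟩

lemma heightOf_lt_of_lt {j i : ι} (h : j < i) : heightOf j < heightOf i := by
  obtain ⟨c, hc, hcj⟩ := heightOf_mem j
  set c' : Fin (heightOf j + 1 + 1) → ι :=
    fun k => if h : (k : ℕ) < heightOf j + 1 then c ⟨k, h⟩ else i with hc'
  have hlast : c' (Fin.last (heightOf j + 1)) = i := dif_neg (by simp)
  have hmono : StrictMono c' := by
    rw [Fin.strictMono_iff_lt_succ]
    intro k
    have hk1 : (k : ℕ) < heightOf j + 1 := k.isLt
    have e1 : c' k.castSucc = c ⟨(k : ℕ), hk1⟩ := dif_pos hk1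
    by_cases h2 : (k : ℕ) + 1 < heightOf j + 1
    · have e2 : c' k.succ = c ⟨(k : ℕ) + 1, h2⟩ := dif_pos h2
      rw [e1, e2]
      exact hc (by rw [Fin.lt_def]; simp)
    · have e2 : c' k.succ = i := dif_neg h2
      rw [e1, e2]
      have hcm : c ⟨(k : ℕ), hk1⟩ = j := by
        have hidx : (⟨(k : ℕ), hk1⟩ : Fin (heightOf j + 1)) = Fin.last (heightOf j) := by
          apply Fin.ext
          simp only [Fin.val_last]
          omega
        rw [hidx, hcj]
      rw [hcm]
      exact h
  have := le_heightOf c' hmono hlast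
  omega

lemma heightOf_le_of_le {j i : ι} (h : j ≤ i) : heightOf j ≤ heightOf i := by
  rcases h.lt_or_eq with h | h
  · exact (heightOf_lt_of_lt h).le
  · rw [h]

lemma exists_height_pred {i : ι} {m : ℕ} (h : heightOf i = m + 1) :
    ∃ j : ι, j < i ∧ heightOf j = m := by
  obtain ⟨c, hc, hci⟩ := heightOf_mem i
  have hm : m < heightOf i + 1 := by omega
  have hlt : (⟨m, hm⟩ : Fin (heightOf i + 1)) < Fin.last (heightOf i) := by
    rw [Fin.lt_def]
    simp only [Fin.val_last]
    omega
  have hji : c ⟨m, hm⟩ < i := by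
    have := hc hlt
    rw [hci] at this
    exact this
  refine ⟨c ⟨m, hm⟩, hji, ?_⟩
  have h1 : m ≤ heightOf (c ⟨m, hm⟩) :=
    le_heightOf (fun k : Fin (m + 1) => c ⟨(k : ℕ), by omega⟩)
      (fun a b hab => hc (by rw [Fin.lt_def] at hab ⊢; simpa using hab)) rfl
  have h2 : heightOf (c ⟨m, hm⟩) < heightOf i := heightOf_lt_of_lt hji
  omega

lemma exists_heightOf_eq (hq : 1 ≤ posetHeight ι) {m : ℕ} (hm : m ≤ posetHeight ι) :
    ∃ i : ι, heightOf i = m := by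
  have hne : {n | ∃ c : Fin (n + 1) → ι, StrictMono c}.Nonempty := by
    by_contra hemp
    rw [Set.not_nonempty_iff_eq_empty] at hemp
    have : posetHeight ι = 0 := by
      unfold posetHeight; rw [hemp]; exact csSup_empty
    omega
  obtain ⟨c, hc⟩ := Nat.sSup_mem hne (posetSet_bdd (ι := ι))
  have htop : heightOf (c (Fin.last _)) = posetHeight ι :=
    le_antisymm (heightOf_le_posetHeight _) (le_heightOf c hc rfl)
  suffices H : ∀ d m', m' + d = posetHeight ι → ∃ i : ι, heightOf i = m' by
    exact H (posetHeight ι - m) m (by omega)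
  intro d
  induction d with
  | zero => intro m' hm'; exact ⟨c (Fin.last _), by omega⟩
  | succ d ih =>
      intro m' hm'
      obtain ⟨i, hi⟩ := ih (m' + 1) (by omega)
      obtain ⟨j, -, hj⟩ := exists_height_pred hi
      exact ⟨j, hj⟩

end Aux

/-- with `q = h(N) ≥ 1` and `D_k = {i : h(i) ≤ k - 1}` for `k = 1, …, q`,
each `D_k` is a downset, `D_1 ⊊ ⋯ ⊊ D_q ⊊ N`, and adding the equalities `x(D_k) = 0`
to the recession cone of `O(N)` reduces it to `{0}`: there is a nested normal
collection of downsets of cardinality exactly `h(N)`. -/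
theorem levels_form_nested_normal_collection
    [Fintype ι] [PartialOrder ι]
    (hq : 1 ≤ posetHeight ι) (D : ℕ → Finset ι)
    (hD : ∀ k, 1 ≤ k → k ≤ posetHeight ι → ∀ i : ι, i ∈ D k ↔ heightOf i ≤ k - 1) :
    (∀ k, 1 ≤ k → k ≤ posetHeight ι → IsDownset (D k)) ∧
    (∀ k, 1 ≤ k → k < posetHeight ι → D k ⊂ D (k + 1)) ∧
    D (posetHeight ι) ⊂ Finset.univ ∧
    {x : ι → ℝ | (∀ S : Finset ι, IsDownset S → 0 ≤ ∑ a ∈ S, x a) ∧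
        (∑ a, x a) = 0 ∧ ∀ k, 1 ≤ k → k ≤ posetHeight ι → ∑ a ∈ D k, x a = 0} = {0} := by
  classical
  refine ⟨?_, ?_, ?_, ?_⟩
  · intro k hk1 hk2 i hi j hji
    rw [hD k hk1 hk2] at hi ⊢
    exact le_trans (heightOf_le_of_le hji) hi
  · intro k hk1 hk2
    rw [Finset.ssubset_def]
    constructor
    · intro i hi
      rw [hD k hk1 (by omega)] at hi
      rw [hD (k + 1) (by omega) (by omega)]
      omega
    · intro hsub
      obtain ⟨i, hi⟩ := exists_heightOf_eq hq (le_of_lt hk2)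
      have hmem : i ∈ D (k + 1) := by
        rw [hD (k + 1) (by omega) (by omega)]; omega
      have := hsub hmem
      rw [hD k hk1 (by omega)] at this
      omega
  · rw [Finset.ssubset_def]
    refine ⟨Finset.subset_univ _, ?_⟩
    intro hsub
    obtain ⟨i, hi⟩ := exists_heightOf_eq hq le_rfl
    have := hsub (Finset.mem_univ i)
    rw [hD _ hq le_rfl] at this
    omega
  · ext x
    simp only [Set.mem_setOf_eq, Set.mem_singleton_iff]
    constructor
    · rintro ⟨h1, h2, h3⟩
      have key : ∀ m : ℕ, ∀ i : ι, heightOf i = m → x i = 0 := by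
        intro m
        induction m using Nat.strong_induction_on with
        | _ m IH =>
        have hnn : ∀ i : ι, heightOf i = m → 0 ≤ x i := by
          intro i hi
          have hQ : IsDownset (univ.filter (· ≤ i)) := by
            intro a ha b hba
            simp only [mem_filter, mem_univ, true_and] at ha ⊢
            exact le_trans hba ha
          have hpos := h1 _ hQ
          have hsum : ∑ a ∈ univ.filter (· ≤ i), x a = x i := by
            refine Finset.sum_eq_single_of_mem i (by simp) ?_
            intro j hj hne
            simp only [mem_filter, mem_univ, true_and] at hj
            refine IH (heightOf j) ?_ j rfl
            have := heightOf_lt_of_lt (lt_of_le_of_ne hj hne)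
            omega
          rw [hsum] at hpos
          exact hpos
        have hEm : ∑ a ∈ univ.filter (fun i => heightOf i ≤ m), x a = 0 := by
          by_cases hmq : m < posetHeight ι
          · have h30 := h3 (m + 1) (by omega) (by omega)
            have hEq : D (m + 1) = univ.filter (fun i => heightOf i ≤ m) := by
              ext i
              simp only [mem_filter, mem_univ, true_and]
              rw [hD (m + 1) (by omega) (by omega)]
              omega
            rwa [hEq] at h30
          · have hEq : univ.filter (fun i => heightOf i ≤ m) = (univ : Finset ι) := by
              ext i
              simp only [mem_filter, mem_univ, true_and, iff_true]
              exact le_trans (heightOf_le_posetHeight i) (by omega)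
            rw [hEq]
            exact h2
        have hsplit : ∑ a ∈ univ.filter (fun i => heightOf i ≤ m), x a
            = ∑ a ∈ univ.filter (fun i => heightOf i = m), x a
              + ∑ a ∈ univ.filter (fun i => heightOf i < m), x a := by
          rw [← Finset.sum_union]
          · apply Finset.sum_congr _ (fun _ _ => rfl)
            ext i
            simp only [mem_union, mem_filter, mem_univ, true_and]
            omega
          · rw [Finset.disjoint_left]
            intro a ha hb
            simp only [mem_filter, mem_univ, true_and] at ha hb
            omega
        have hlow : ∑ a ∈ univ.filter (fun i => heightOf i < m), x a = 0 :=
          Finset.sum_eq_zero fun j hj => by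
            simp only [mem_filter, mem_univ, true_and] at hj
            exact IH _ hj j rfl
        have hlevel : ∑ a ∈ univ.filter (fun i => heightOf i = m), x a = 0 := by
          rw [hsplit, hlow] at hEm
          linarith
        intro i hi
        refine (Finset.sum_eq_zero_iff_of_nonneg ?_).mp hlevel i (by simp [hi])
        intro j hj
        simp only [mem_filter, mem_univ, true_and] at hj
        exact hnn j hj
      funext i
      exact key (heightOf i) i rfl
    · rintro rfl
      refine ⟨fun S _ => le_of_eq ?_, ?_, fun k _ _ => ?_⟩ <;> simp [Pi.zero_apply]
end

section
/- Let ≤ be a partial order on the finite player set N and let 𝒩 = {N_1, …, N_q} be a nested normal collection of downsets. Then for every game v on O(N), the restricted core is contained in the restricted Weber set: C_𝒩(v) ⊆ W_𝒩(v). -/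
open Finset

variable {ι : Type*}

/-- A maximal chain `∅ = S_0 ⊊ S_1 ⊊ ⋯ ⊊ S_n = N` in `O(N)` (the collection of downsets),
with `|S_k| = k`, encoded as an increasing `ℕ`-indexed family of downsets with
`(S k).card = k` for `k ≤ n`. -/
def MaximalChain [Fintype ι] [PartialOrder ι] (S : ℕ → Finset ι) : Prop :=
  (∀ k, IsDownset (S k)) ∧ (∀ k, S k ⊆ S (k + 1)) ∧
    ∀ k ≤ Fintype.card ι, (S k).card = k

/-- The marginal vector `x^C` of the chain `C = (S_k)_k` for the game `v`:
`x^C_i = v(S_k) - v(S_{k-1})` where `k` is the first index with `i ∈ S_k`. -/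
noncomputable def marginal (v : Finset ι → ℝ) (S : ℕ → Finset ι) (i : ι) : ℝ :=
  v (S (sInf {k | i ∈ S k})) - v (S (sInf {k | i ∈ S k} - 1))

/-- The core of a game `v` on `O(N)`. -/
def core [Fintype ι] [PartialOrder ι] (v : Finset ι → ℝ) : Set (ι → ℝ) :=
  {x | (∀ S : Finset ι, IsDownset S → v S ≤ ∑ a ∈ S, x a) ∧ ∑ a, x a = v Finset.univ}

/-- `𝒩` is a collection of downsets, all different from `N`. -/
def DownsetCollection [Fintype ι] [PartialOrder ι] (𝒩 : Finset (Finset ι)) : Prop :=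
  ∀ A ∈ 𝒩, IsDownset A ∧ A ≠ Finset.univ

/-- `𝒩` is a normal collection: turning the core inequalities indexed by `𝒩` into
equalities makes the recession cone reduce to `{0}`. -/
def NormalCollection [Fintype ι] [PartialOrder ι] (𝒩 : Finset (Finset ι)) : Prop :=
  DownsetCollection 𝒩 ∧
    {x : ι → ℝ | (∀ S : Finset ι, IsDownset S → 0 ≤ ∑ a ∈ S, x a) ∧
      (∑ a, x a) = 0 ∧ ∀ A ∈ 𝒩, ∑ a ∈ A, x a = 0} = {0}

/-- `𝒩` is nested: it is a chain under inclusion. -/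
def Nested (𝒩 : Finset (Finset ι)) : Prop :=
  ∀ A ∈ 𝒩, ∀ B ∈ 𝒩, A ⊆ B ∨ B ⊆ A

/-- The restricted core `C_𝒩(v)`: elements of the core satisfying `x(A) = v(A)` for `A ∈ 𝒩`. -/
def restrictedCore [Fintype ι] [PartialOrder ι] (𝒩 : Finset (Finset ι))
    (v : Finset ι → ℝ) : Set (ι → ℝ) :=
  {x ∈ core v | ∀ A ∈ 𝒩, ∑ a ∈ A, x a = v A}

/-- A restricted maximal chain: a maximal chain in `O(N)` passing through every `A ∈ 𝒩`. -/
def RestrictedChain [Fintype ι] [PartialOrder ι] (𝒩 : Finset (Finset ι))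
    (S : ℕ → Finset ι) : Prop :=
  MaximalChain S ∧ ∀ A ∈ 𝒩, ∃ k, S k = A

/-- The restricted Weber set `W_𝒩(v)`: the convex hull of the marginal vectors of all
restricted maximal chains. -/
def restrictedWeber [Fintype ι] [PartialOrder ι] (𝒩 : Finset (Finset ι))
    (v : Finset ι → ℝ) : Set (ι → ℝ) :=
  convexHull ℝ {x | ∃ S : ℕ → Finset ι, RestrictedChain 𝒩 S ∧ x = marginal v S}

section Aux

set_option linter.unusedSectionVars false

variable [Fintype ι] [PartialOrder ι] [DecidableEq ι] (𝒩 : Finset (Finset ι))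

/-- block index of a player: the number of members of `𝒩` NOT containing it. -/
def blockIdx (i : ι) : ℕ := (𝒩.filter (fun A => i ∉ A)).card

lemma sep_of_normal (hnormal : NormalCollection 𝒩) {i j : ι} (h : j < i) :
    ∃ A ∈ 𝒩, j ∈ A ∧ i ∉ A := by
  by_contra h'
  push_neg at h'
  set z : ι → ℝ := fun a => (if a = j then 1 else 0) - (if a = i then 1 else 0) with hz
  have hsum : ∀ S : Finset ι, ∑ a ∈ S, z a
      = (if j ∈ S then (1:ℝ) else 0) - (if i ∈ S then (1:ℝ) else 0) := by
    intro S
    simp [hz, Finset.sum_sub_distrib, Finset.sum_ite_eq']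
  have hmem : z ∈ ({0} : Set (ι → ℝ)) := by
    rw [← hnormal.2]
    refine ⟨?_, ?_, ?_⟩
    · intro S hS
      rw [hsum]
      by_cases hiS : i ∈ S
      · have : j ∈ S := hS hiS h.le
        simp [this, hiS]
      · by_cases hjS : j ∈ S <;> simp [hjS, hiS]
    · rw [hsum]; simp
    · intro A hA
      rw [hsum]
      by_cases hjA : j ∈ A
      · have hiA : i ∈ A := h' A hA hjA
        simp [hjA, hiA]
      · have hiA : i ∉ A := fun hiA => hjA ((hnormal.1 A hA).1 hiA h.le)
        simp [hjA, hiA]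
  have hzj : z j = 1 := by
    have : j ≠ i := ne_of_lt h
    simp [hz, this]
  rw [Set.mem_singleton_iff] at hmem
  rw [hmem] at hzj
  norm_num at hzj

lemma blockIdx_lt_of_lt (hnormal : NormalCollection 𝒩) {i j : ι} (h : j < i) :
    blockIdx 𝒩 j < blockIdx 𝒩 i := by
  obtain ⟨A, hA, hjA, hiA⟩ := sep_of_normal 𝒩 hnormal h
  apply Finset.card_lt_card
  constructor
  · intro B hB
    simp only [Finset.mem_filter] at hB ⊢
    exact ⟨hB.1, fun hiB => hB.2 ((hnormal.1 B hB.1).1 hiB h.le)⟩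
  · intro hsub
    have : A ∈ 𝒩.filter (fun B => i ∉ B) := by simp [hA, hiA]
    have := hsub this
    simp [hjA] at this

lemma exists_sep_of_blockIdx_lt {i j : ι} (h : blockIdx 𝒩 i < blockIdx 𝒩 j) :
    ∃ A ∈ 𝒩, i ∈ A ∧ j ∉ A := by
  by_contra h'
  push_neg at h'
  have hss : 𝒩.filter (fun A => j ∉ A) ⊆ 𝒩.filter (fun A => i ∉ A) := by
    intro B hB
    simp only [Finset.mem_filter] at hB ⊢
    exact ⟨hB.1, fun hiB => hB.2 (h' B hB.1 hiB)⟩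
  have := Finset.card_le_card hss
  unfold blockIdx at h
  omega

lemma blockIdx_lt_of_mem (hnested : Nested 𝒩) {A : Finset ι} (hA : A ∈ 𝒩)
    {i j : ι} (hi : i ∈ A) (hj : j ∉ A) : blockIdx 𝒩 i < blockIdx 𝒩 j := by
  apply Finset.card_lt_card
  constructor
  · intro B hB
    simp only [Finset.mem_filter] at hB ⊢
    refine ⟨hB.1, ?_⟩
    rcases hnested A hA B hB.1 with hAB | hBA
    · exact absurd (hAB hi) hB.2
    · exact fun hjB => hj (hBA hjB)
  · intro hsub
    have : A ∈ 𝒩.filter (fun B => j ∉ B) := by simp [hA, hj]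
    have := hsub this
    simp [hi] at this

/-- Abel-summation induction step. -/
lemma abel_aux (g X : ℕ → ℝ) (n : ℕ) (h0 : X 0 = 0) (hX : ∀ k, 0 ≤ X k)
    (hcond : ∀ k, 1 ≤ k → k < n → g k ≤ g (k - 1) ∨ X k = 0) :
    ∀ m, 1 ≤ m → m ≤ n → g (m - 1) * X m ≤ ∑ k ∈ Finset.range m, g k * (X (k + 1) - X k) := by
  intro m
  induction m with
  | zero => omega
  | succ m ih =>
    intro _ hmn
    rcases Nat.eq_zero_or_pos m with rfl | hm
    · simp [h0]
    · have H := ih (by omega) (by omega)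
      rw [Finset.sum_range_succ]
      have hXm := hX m
      have hm1 : m + 1 - 1 = m := rfl
      rw [hm1]
      rcases hcond m hm (by omega) with hc | hc
      · nlinarith [mul_nonneg (sub_nonneg.mpr hc) hXm]
      · rw [hc] at H ⊢
        simp only [mul_zero] at H
        linarith

lemma marginals_finite (v : Finset ι → ℝ) :
    {x : ι → ℝ | ∃ S : ℕ → Finset ι, RestrictedChain 𝒩 S ∧ x = marginal v S}.Finite := by
  classical
  set n := Fintype.card ι with hn
  apply Set.Finite.subset (Set.finite_range
    (fun (T : Fin (n+1) → Finset ι) => marginal v (fun k => T ⟨min k n, by omega⟩)))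
  rintro x ⟨S, ⟨⟨hdown, hmono, hcard⟩, -⟩, rfl⟩
  refine ⟨fun k => S k.val, ?_⟩
  have hSn : ∀ i : ι, i ∈ S n := by
    have : S n = Finset.univ := Finset.eq_univ_of_card _ (hcard n le_rfl)
    intro i; rw [this]; exact Finset.mem_univ i
  funext i
  show marginal v (fun k => S (min k n)) i = marginal v S i
  have h1 : sInf {k | i ∈ S k} ≤ n := Nat.sInf_le (hSn i)
  have hmin : sInf {k | i ∈ S (min k n)} = sInf {k | i ∈ S k} := by
    apply le_antisymm
    · apply Nat.sInf_le
      have hmem : sInf {k | i ∈ S k} ∈ {k | i ∈ S k} := Nat.sInf_mem ⟨n, hSn i⟩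
      simpa [min_eq_left h1] using hmem
    · have hne : ({k | i ∈ S (min k n)} : Set ℕ).Nonempty := ⟨n, by simpa using hSn i⟩
      have hmem := Nat.sInf_mem hne
      have hmem' : i ∈ S (min (sInf {k | i ∈ S (min k n)}) n) := hmem
      calc sInf {k | i ∈ S k} ≤ min (sInf {k | i ∈ S (min k n)}) n := Nat.sInf_le hmem'
        _ ≤ _ := min_le_left _ _
  unfold marginal
  rw [hmin]
  have h2 : min (sInf {k | i ∈ S k}) n = sInf {k | i ∈ S k} := min_eq_left h1
  have h3 : min (sInf {k | i ∈ S k} - 1) n = sInf {k | i ∈ S k} - 1 :=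
    min_eq_left (by omega)
  simp only [h2, h3]

lemma exists_good_chain (hnormal : NormalCollection 𝒩) (hnested : Nested 𝒩)
    (v : Finset ι → ℝ) (hv : v ∅ = 0) (y : ι → ℝ) :
    ∃ S : ℕ → Finset ι, RestrictedChain 𝒩 S ∧
      ∀ x ∈ restrictedCore 𝒩 v, ∑ i, marginal v S i * y i ≤ ∑ i, x i * y i := by
  classical
  set n := Fintype.card ι with hn
  set c : ι → ℕ := blockIdx 𝒩 with hc
  set le : ι → ι → Bool := fun a b => decide (c a < c b ∨ (c a = c b ∧ y b ≤ y a)) with hle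
  have hletrans : ∀ a b d : ι, le a b = true → le b d = true → le a d = true := by
    intro a b d hab hbd
    simp only [hle, decide_eq_true_eq] at hab hbd ⊢
    rcases hab with h | ⟨h, h'⟩ <;> rcases hbd with h2 | ⟨h2, h2'⟩
    · left; omega
    · left; omega
    · left; omega
    · right; exact ⟨h.trans h2, h2'.trans h'⟩
  have hletot : ∀ a b : ι, (le a b || le b a) = true := by
    intro a b
    simp only [hle, Bool.or_eq_true, decide_eq_true_eq]
    rcases lt_trichotomy (c a) (c b) with h | h | h
    · left; left; exact h
    · rcases le_total (y b) (y a) with h' | h'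
      · left; right; exact ⟨h, h'⟩
      · right; right; exact ⟨h.symm, h'⟩
    · right; left; exact h
  set l : List ι := (Finset.univ (α := ι)).toList.mergeSort le with hl
  have hperm : l.Perm Finset.univ.toList := List.mergeSort_perm _ _
  have hnd : l.Nodup := hperm.nodup_iff.mpr (Finset.nodup_toList _)
  have hmem : ∀ a : ι, a ∈ l := fun a => hperm.mem_iff.mpr (by simp [Finset.mem_toList])
  have hlen : l.length = n := by rw [hperm.length_eq, Finset.length_toList, Finset.card_univ]
  have hsorted : List.Pairwise (fun a b => le a b = true) l :=
    List.pairwise_mergeSort hletrans hletot _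
  have hpair : ∀ (i j : ℕ) (hi : i < l.length) (hj : j < l.length), i < j →
      le (l[i]'hi) (l[j]'hj) = true := List.pairwise_iff_getElem.mp hsorted
  have hidx_lt : ∀ {a b : ι}, c a < c b → l.idxOf a < l.idxOf b := by
    intro a b hab
    have ha : l.idxOf a < l.length := List.idxOf_lt_length_iff.mpr (hmem a)
    have hb : l.idxOf b < l.length := List.idxOf_lt_length_iff.mpr (hmem b)
    rcases lt_trichotomy (l.idxOf a) (l.idxOf b) with h | h | h
    · exact h
    · exfalso
      have hab' : a = b := by
        have h1 := List.getElem_idxOf ha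
        have h2 := List.getElem_idxOf hb
        rw [← h1, ← h2]
        simp only [h]
      rw [hab'] at hab
      exact lt_irrefl _ hab
    · exfalso
      have hp := hpair _ _ hb ha h
      rw [List.getElem_idxOf hb, List.getElem_idxOf ha] at hp
      simp only [hle, decide_eq_true_eq] at hp
      rcases hp with h' | ⟨h', -⟩ <;> omega
  set S : ℕ → Finset ι := fun k => (l.take k).toFinset with hS
  have hmemS : ∀ (i : ι) (k : ℕ), i ∈ S k ↔ l.idxOf i < k := by
    intro i k
    simp only [hS, List.mem_toFinset]
    constructor
    · intro hi
      obtain ⟨m, hm, hmi⟩ := List.mem_iff_getElem.mp hi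
      rw [List.length_take] at hm
      have hm1 : m < k := lt_of_lt_of_le hm (min_le_left _ _)
      have hm2 : m < l.length := lt_of_lt_of_le hm (min_le_right _ _)
      have : l[m]'hm2 = i := by rw [← List.getElem_take]; exact hmi
      rw [← this, List.Nodup.idxOf_getElem hnd]
      exact hm1
    · intro h
      have hil : i ∈ l := hmem i
      have hidx : l.idxOf i < l.length := List.idxOf_lt_length_iff.mpr hil
      refine List.mem_iff_getElem.mpr ⟨l.idxOf i, ?_, ?_⟩
      · rw [List.length_take]; exact lt_min h hidx
      · rw [List.getElem_take]
        exact List.getElem_idxOf hidx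
  have hgetiff : ∀ (a : ι) (k : ℕ) (hk : k < l.length), a = l[k]'hk ↔ l.idxOf a = k := by
    intro a k hk
    constructor
    · rintro rfl; exact List.Nodup.idxOf_getElem hnd _ _
    · rintro rfl; exact (List.getElem_idxOf (List.idxOf_lt_length_iff.mpr (hmem a))).symm
  have hmile : ∀ A ∈ 𝒩, S A.card = A := by
    intro A hA
    have hcardA : A.card ≤ n := Finset.card_le_univ A
    have hsub : S A.card ⊆ A := by
      intro x hx
      by_contra hxA
      have hxk : l.idxOf x < A.card := (hmemS x A.card).mp hx
      have hkey : ∀ a ∈ A, l.idxOf a < l.idxOf x := fun a ha =>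
        hidx_lt (blockIdx_lt_of_mem 𝒩 hnested hA ha hxA)
      have hinj : Set.InjOn (fun a => l.idxOf a) ↑(insert x A) := by
        intro a _ b _ hab
        have ha' : l.idxOf a < l.length := List.idxOf_lt_length_iff.mpr (hmem a)
        have hb' : l.idxOf b < l.length := List.idxOf_lt_length_iff.mpr (hmem b)
        have h1 := List.getElem_idxOf ha'
        have h2 := List.getElem_idxOf hb'
        rw [← h1, ← h2]
        simp only [hab]
      have himg : (insert x A).image (fun a => l.idxOf a) ⊆ Finset.range A.card := by
        intro m hm
        simp only [Finset.mem_image] at hm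
        obtain ⟨a, ha, rfl⟩ := hm
        rcases Finset.mem_insert.mp ha with rfl | ha
        · exact Finset.mem_range.mpr hxk
        · exact Finset.mem_range.mpr ((hkey a ha).trans hxk)
      have hle1 := Finset.card_le_card himg
      rw [Finset.card_image_of_injOn hinj, Finset.card_insert_of_notMem hxA,
        Finset.card_range] at hle1
      omega
    have hcardS : (S A.card).card = A.card := by
      simp only [hS]
      rw [List.toFinset_card_of_nodup ((List.take_sublist _ _).nodup hnd),
        List.length_take, hlen]
      omega
    exact Finset.eq_of_subset_of_card_le hsub hcardS.ge
  have hdownS : ∀ k, IsDownset (S k) := by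
    intro k i hi j hji
    rcases eq_or_lt_of_le hji with rfl | hlt
    · exact hi
    · have hij := hidx_lt (blockIdx_lt_of_lt 𝒩 hnormal hlt)
      rw [hmemS] at hi ⊢
      omega
  have hmono : ∀ k, S k ⊆ S (k+1) := by
    intro k a ha
    rw [hmemS] at ha ⊢
    omega
  have hcard : ∀ k ≤ n, (S k).card = k := by
    intro k hk
    simp only [hS]
    rw [List.toFinset_card_of_nodup ((List.take_sublist _ _).nodup hnd),
      List.length_take, hlen]
    omega
  refine ⟨S, ⟨⟨hdownS, hmono, hcard⟩, fun A hA => ⟨A.card, hmile A hA⟩⟩, ?_⟩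
  intro x hx
  obtain ⟨⟨hcore_ineq, hcore_eq⟩, hres⟩ := hx
  rcases isEmpty_or_nonempty ι with hempty | hne
  · simp [Finset.univ_eq_empty]
  · inhabit ι
    set e : ℕ → ι := fun k => l.getD k default with he
    have hegete : ∀ (k : ℕ) (hk : k < n), e k = l[k]'(by omega) :=
      fun k hk => List.getD_eq_getElem l default (by omega)
    set X : ℕ → ℝ := fun k => (∑ a ∈ S k, x a) - v (S k) with hX
    set g : ℕ → ℝ := fun k => if hk : k < l.length then y (l[k]'hk) else 0 with hg
    have hX0 : X 0 = 0 := by simp [hX, hS, hv]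
    have hXn : X n = 0 := by
      have hSn : S n = Finset.univ := Finset.eq_univ_of_card _ (hcard n le_rfl)
      simp [hX, hSn, hcore_eq]
    have hXpos : ∀ k, 0 ≤ X k := fun k => sub_nonneg.mpr (hcore_ineq _ (hdownS k))
    have hXzero : ∀ A ∈ 𝒩, X A.card = 0 := by
      intro A hA
      simp [hX, hmile A hA, hres A hA]
    have hcond : ∀ k, 1 ≤ k → k < n → g k ≤ g (k-1) ∨ X k = 0 := by
      intro k hk1 hkn
      have hk1' : k - 1 < l.length := by omega
      have hk' : k < l.length := by omega
      have hp := hpair _ _ hk1' hk' (by omega)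
      simp only [hle, decide_eq_true_eq] at hp
      rcases hp with hlt | ⟨heq, hy⟩
      · right
        obtain ⟨A, hA, hiA, hjA⟩ := exists_sep_of_blockIdx_lt 𝒩 hlt
        have h1 : l.idxOf (l[k-1]'hk1') < A.card :=
          (hmemS _ _).mp (by rw [hmile A hA]; exact hiA)
        have h2 : ¬ (l.idxOf (l[k]'hk') < A.card) := fun hcontra =>
          hjA (by rw [← hmile A hA]; exact (hmemS _ _).mpr hcontra)
        rw [List.Nodup.idxOf_getElem hnd] at h1 h2
        have hAk : A.card = k := by omega
        rw [← hAk]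
        exact hXzero A hA
      · left
        simp only [hg]
        rw [dif_pos hk', dif_pos hk1']
        exact hy
    have hreindex : ∀ F : ι → ℝ, ∑ i, F i = ∑ k ∈ Finset.range n, F (e k) := by
      intro F
      apply Finset.sum_nbij' (i := fun a : ι => l.idxOf a) (j := e)
      · intro a _
        exact Finset.mem_range.mpr (by rw [← hlen]; exact List.idxOf_lt_length_iff.mpr (hmem a))
      · intro k _; exact Finset.mem_univ _
      · intro a _
        have ha : l.idxOf a < l.length := List.idxOf_lt_length_iff.mpr (hmem a)
        rw [hegete _ (by omega)]
        exact List.getElem_idxOf ha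
      · intro k hk
        rw [hegete _ (Finset.mem_range.mp hk)]
        exact List.Nodup.idxOf_getElem hnd _ _
      · intro a _
        have ha : l.idxOf a < l.length := List.idxOf_lt_length_iff.mpr (hmem a)
        rw [hegete _ (by omega), List.getElem_idxOf ha]
    have hstep : ∀ (k : ℕ) (hk : k < n),
        x (e k) * y (e k) - marginal v S (e k) * y (e k) = g k * (X (k+1) - X k) := by
      intro k hk
      have hk' : k < l.length := by omega
      have hidxk : l.idxOf (l[k]'hk') = k := List.Nodup.idxOf_getElem hnd k hk'
      have hnotmem : (l[k]'hk') ∉ S k := by rw [hmemS, hidxk]; omega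
      have hins : S (k+1) = insert (l[k]'hk') (S k) := by
        ext a
        rw [Finset.mem_insert, hmemS, hmemS, hgetiff a k hk']
        omega
      have hsumins : ∑ a ∈ S (k+1), x a = x (l[k]'hk') + ∑ a ∈ S k, x a := by
        rw [hins, Finset.sum_insert hnotmem]
      have hinf : sInf {m | (l[k]'hk') ∈ S m} = k + 1 := by
        have hset : {m | (l[k]'hk') ∈ S m} = Set.Ici (k+1) := by
          ext m
          simp only [Set.mem_setOf_eq, Set.mem_Ici, hmemS, hidxk]
          omega
        rw [hset, csInf_Ici]
      have hmarg : marginal v S (l[k]'hk') = v (S (k+1)) - v (S k) := by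
        simp only [marginal, hinf]
        norm_num
      rw [hegete k hk, hmarg]
      simp only [hX, hg, dif_pos hk']
      rw [hsumins]
      ring
    have hsum : ∑ i, x i * y i - ∑ i, marginal v S i * y i
        = ∑ k ∈ Finset.range n, g k * (X (k+1) - X k) := by
      rw [hreindex (fun i => x i * y i), hreindex (fun i => marginal v S i * y i),
        ← Finset.sum_sub_distrib]
      exact Finset.sum_congr rfl fun k hk => hstep k (Finset.mem_range.mp hk)
    have hn1 : 1 ≤ n := Fintype.card_pos
    have habel := abel_aux g X n hX0 hXpos hcond n hn1 le_rfl
    rw [hXn, mul_zero] at habel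
    linarith

end Aux

/-- for a nested normal collection `𝒩` and any game `v` on `O(N)`,
the restricted core is contained in the restricted Weber set. -/
theorem restrictedCore_subset_restrictedWeber
    [Fintype ι] [PartialOrder ι] (𝒩 : Finset (Finset ι))
    (hnormal : NormalCollection 𝒩) (hnested : Nested 𝒩)
    (v : Finset ι → ℝ) (hv : v ∅ = 0) :
    restrictedCore 𝒩 v ⊆ restrictedWeber 𝒩 v := by
  classical
  intro x hx
  by_contra hcon
  set M : Set (ι → ℝ) := {w | ∃ S : ℕ → Finset ι, RestrictedChain 𝒩 S ∧ w = marginal v S}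
    with hM
  have hfin : M.Finite := marginals_finite 𝒩 v
  have hclosed : IsClosed (convexHull ℝ M) := (hfin.isCompact_convexHull ℝ).isClosed
  have hconv : Convex ℝ (convexHull ℝ M) := convex_convexHull ℝ M
  obtain ⟨f, u, hfx, hfb⟩ := geometric_hahn_banach_point_closed hconv hclosed hcon
  set y : ι → ℝ := fun i => f (fun j => if i = j then 1 else 0) with hy
  have hf : ∀ z : ι → ℝ, f z = ∑ i, z i * y i := by
    intro z
    conv_lhs => rw [pi_eq_sum_univ z]
    rw [map_sum]
    simp [hy, smul_eq_mul]
  obtain ⟨S, hchain, hineq⟩ := exists_good_chain 𝒩 hnormal hnested v hv y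
  have hmemM : marginal v S ∈ M := ⟨S, hchain, rfl⟩
  have h1 : u < f (marginal v S) := hfb _ (subset_convexHull ℝ M hmemM)
  have h2 := hineq x hx
  rw [hf x, hf (marginal v S)] at *
  linarith
end

section
/- Let F be a weakly union-closed set system on the finite player set N, and let F̃ be its closure under union and intersection. Suppose that every S ∈ F̃ ∖ F is either a union of pairwise disjoint members of F, or there exist S₁, S₂ ∈ F with S = S₁ ∩ S₂ together with a finite family of pairwise disjoint members of F whose union is N ∖ (S₁ ∪ S₂). Then C(0) = C̃(0), i.e., the recession cones (and hence the extremal rays) defined by F and by F̃ coincide. -/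
open Finset

variable {ι : Type*}

/-- The closure `F̃` of `F` under (pairwise) union and intersection: the smallest
collection of subsets of `N` containing `F` and closed under union and intersection. -/
inductive closureUI [DecidableEq ι] (F : Set (Finset ι)) : Finset ι → Prop
  | base {S : Finset ι} : S ∈ F → closureUI F S
  | union {S T : Finset ι} : closureUI F S → closureUI F T → closureUI F (S ∪ T)
  | inter {S T : Finset ι} : closureUI F S → closureUI F T → closureUI F (S ∩ T)

/-- `F` is weakly union-closed: the union of two non-disjoint members of `F` is in `F`. -/
def WeaklyUnionClosed [DecidableEq ι] (F : Set (Finset ι)) : Prop :=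
  ∀ S₁ ∈ F, ∀ S₂ ∈ F, (S₁ ∩ S₂).Nonempty → S₁ ∪ S₂ ∈ F

/-- let `F` be weakly union-closed and suppose every `S ∈ F̃ \ F` is either a
union of pairwise disjoint members of `F`, or an intersection `S₁ ∩ S₂` of members of `F`
such that `N \ (S₁ ∪ S₂)` is a union of pairwise disjoint members of `F`. Then
`C(0) = C̃(0)`. -/
theorem recCone_eq_recCone_closure_of_weaklyUnionClosed
    [Fintype ι] [DecidableEq ι] (F : Set (Finset ι))
    (hbot : ∅ ∈ F) (htop : Finset.univ ∈ F) (hwuc : WeaklyUnionClosed F)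
    (hcond : ∀ S : Finset ι, closureUI F S → S ∉ F →
      (∃ T : Finset (Finset ι), ↑T ⊆ F ∧
          (↑T : Set (Finset ι)).PairwiseDisjoint id ∧ S = T.sup id) ∨
        (∃ S₁ ∈ F, ∃ S₂ ∈ F, S = S₁ ∩ S₂ ∧
          ∃ T : Finset (Finset ι), ↑T ⊆ F ∧
            (↑T : Set (Finset ι)).PairwiseDisjoint id ∧
            Finset.univ \ (S₁ ∪ S₂) = T.sup id)) :
    recCone F = recCone {S | closureUI F S} := by

  have key : ∀ (x : ι → ℝ), (∑ k, x k = 0) → (∀ S ∈ F, 0 ≤ ∑ k ∈ S, x k) →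
      ∀ (T : Finset (Finset ι)), ↑T ⊆ F →
      (↑T : Set (Finset ι)).PairwiseDisjoint id → 0 ≤ ∑ k ∈ T.sup id, x k := by
    intro x _ h1 T hTF hTd
    rw [Finset.sup_eq_biUnion, Finset.sum_biUnion hTd]
    exact Finset.sum_nonneg fun A hA => h1 A (hTF hA)
  ext x
  simp only [recCone, Set.mem_setOf_eq]
  constructor
  · rintro ⟨h1, h2⟩
    refine ⟨fun S hS => ?_, h2⟩
    by_cases hSF : S ∈ F
    · exact h1 S hSF
    rcases hcond S hS hSF with ⟨T, hTF, hTd, rfl⟩ | ⟨S₁, hS₁, S₂, hS₂, rfl, T, hTF, hTd, hT⟩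
    · exact key x h2 h1 T hTF hTd
    · have hcompl : 0 ≤ ∑ k ∈ Finset.univ \ (S₁ ∪ S₂), x k := by
        rw [hT]; exact key x h2 h1 T hTF hTd
    -- sum over S₁ ∪ S₂ is ≤ 0
      have hsplit : ∑ k ∈ S₁ ∪ S₂, x k + ∑ k ∈ Finset.univ \ (S₁ ∪ S₂), x k = 0 := by
        rw [add_comm, Finset.sum_sdiff (Finset.subset_univ _), h2]
      have hIE : ∑ k ∈ S₁ ∪ S₂, x k + ∑ k ∈ S₁ ∩ S₂, x k = ∑ k ∈ S₁, x k + ∑ k ∈ S₂, x k :=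
        Finset.sum_union_inter
      have := h1 S₁ hS₁
      have := h1 S₂ hS₂
      linarith
  · rintro ⟨h1, h2⟩
    exact ⟨fun S hS => h1 S (closureUI.base hS), h2⟩
end

section
/- Let ≤ be a partial order on the finite player set N, let 𝒩 = {N_1, …, N_q} be a collection of downsets in O(N) ∖ {N} forming a chain under inclusion, and let v be a convex game on O(N). Then every restricted marginal vector (the marginal vector of a maximal chain in O(N) containing every N_k) belongs to the restricted core C_𝒩(v); consequently W_𝒩(v) ⊆ C_𝒩(v). -/
open Finset

variable {ι : Type*}

section Aux

variable [Fintype ι] [DecidableEq ι] [PartialOrder ι]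

lemma isDownset_inter {A B : Finset ι} (hA : IsDownset A) (hB : IsDownset B) :
    IsDownset (A ∩ B) := by
  intro i hi j hj
  rw [mem_inter] at hi ⊢
  exact ⟨hA hi.1 hj, hB hi.2 hj⟩

variable {S : ℕ → Finset ι}

lemma chain_mono (hS : MaximalChain S) : Monotone S :=
  monotone_nat_of_le_succ hS.2.1

lemma chain_zero (hS : MaximalChain S) : S 0 = ∅ :=
  card_eq_zero.mp (hS.2.2 0 (Nat.zero_le _))

lemma chain_top (hS : MaximalChain S) {k : ℕ} (hk : Fintype.card ι ≤ k) :
    S k = Finset.univ := by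
  have h1 : S (Fintype.card ι) = Finset.univ :=
    Finset.eq_univ_of_card _ (hS.2.2 _ le_rfl)
  exact subset_antisymm (subset_univ _) (h1 ▸ chain_mono hS hk)

lemma chain_step (hS : MaximalChain S) {k : ℕ} (hk : k < Fintype.card ι) :
    ∃ i, i ∉ S k ∧ S (k + 1) = insert i (S k) := by
  have hsub := hS.2.1 k
  have hc1 : (S k).card = k := hS.2.2 k hk.le
  have hc2 : (S (k + 1)).card = k + 1 := hS.2.2 (k + 1) hk
  have hcd : (S (k + 1) \ S k).card = 1 := by
    rw [card_sdiff_of_subset hsub, hc1, hc2]; omega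
  obtain ⟨i, hi⟩ := card_eq_one.mp hcd
  have hmem : i ∈ S (k + 1) \ S k := hi ▸ mem_singleton_self i
  refine ⟨i, (mem_sdiff.mp hmem).2, ?_⟩
  have := Finset.union_sdiff_of_subset hsub
  rw [hi] at this
  rw [← this]
  ext x
  simp [mem_union, mem_insert, or_comm]

lemma marginal_step (v : Finset ι → ℝ) (hS : MaximalChain S) {k : ℕ} {i : ι}
    (hi : i ∉ S k) (hins : S (k + 1) = insert i (S k)) :
    marginal v S i = v (S (k + 1)) - v (S k) := by
  have hmem : i ∈ S (k + 1) := hins ▸ mem_insert_self i _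
  have hinf : sInf {m | i ∈ S m} = k + 1 := by
    refine le_antisymm (Nat.sInf_le hmem) (le_csInf ⟨k + 1, hmem⟩ ?_)
    intro m hm
    by_contra h
    push_neg at h
    exact hi (chain_mono hS (Nat.lt_succ_iff.mp h) hm)
  rw [marginal, hinf, Nat.add_sub_cancel]

lemma chain_sum (v : Finset ι → ℝ) (hv : v ∅ = 0) (hS : MaximalChain S) :
    ∀ k ≤ Fintype.card ι, ∑ a ∈ S k, marginal v S a = v (S k) := by
  intro k
  induction k with
  | zero => intro _; rw [chain_zero hS]; simp [hv]
  | succ k ih =>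
    intro hk
    have hk' : k < Fintype.card ι := hk
    obtain ⟨i, hi, hins⟩ := chain_step hS hk'
    rw [hins, sum_insert hi, marginal_step v hS hi hins, ih hk'.le, ← hins]
    ring

lemma chain_core_ineq (v : Finset ι → ℝ) (hv : v ∅ = 0)
    (hconv : ∀ S T : Finset ι, IsDownset S → IsDownset T →
      v S + v T ≤ v (S ∪ T) + v (S ∩ T))
    (hS : MaximalChain S) {T : Finset ι} (hT : IsDownset T) :
    v T ≤ ∑ a ∈ T, marginal v S a := by
  have key : ∀ k, v (T ∩ S k) ≤ ∑ a ∈ T ∩ S k, marginal v S a := by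
    intro k
    induction k with
    | zero => rw [chain_zero hS]; simp [hv]
    | succ k ih =>
      by_cases hk : k < Fintype.card ι
      · obtain ⟨i, hi, hins⟩ := chain_step hS hk
        by_cases hiT : i ∈ T
        · have hTS : T ∩ S (k + 1) = insert i (T ∩ S k) := by
            rw [hins]; ext x
            by_cases hx : x = i <;> simp [hx, hiT]
          have hUnion : (T ∩ S (k + 1)) ∪ S k = S (k + 1) := by
            rw [hins]; ext x
            by_cases hx : x = i <;> simp [hx, hiT]
          have hInter : (T ∩ S (k + 1)) ∩ S k = T ∩ S k := by
            rw [inter_assoc, inter_eq_right.mpr (hS.2.1 k)]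
          have hcv := hconv (T ∩ S (k + 1)) (S k)
            (isDownset_inter hT (hS.1 _)) (hS.1 k)
          rw [hUnion, hInter] at hcv
          have hiTS : i ∉ T ∩ S k := fun h => hi (mem_inter.mp h).2
          rw [hTS, sum_insert hiTS, marginal_step v hS hi hins]
          rw [hTS] at hcv
          linarith
        · have hTS : T ∩ S (k + 1) = T ∩ S k := by
            rw [hins]; ext x
            by_cases hx : x = i <;> simp [hx, hiT]
          rw [hTS]; exact ih
      · push_neg at hk
        have h1 : S (k + 1) = S k := by
          rw [chain_top hS hk, chain_top hS (le_trans hk (Nat.le_succ k))]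
        rw [h1]; exact ih
  have := key (Fintype.card ι)
  rwa [chain_top hS le_rfl, inter_univ] at this

lemma restrictedCore_convex (𝒩 : Finset (Finset ι)) (v : Finset ι → ℝ) :
    Convex ℝ (restrictedCore 𝒩 v) := by
  intro x hx y hy a b ha hb hab
  obtain ⟨⟨hx1, hx2⟩, hx3⟩ := hx
  obtain ⟨⟨hy1, hy2⟩, hy3⟩ := hy
  have hsum : ∀ T : Finset ι, ∑ c ∈ T, (a • x + b • y) c
      = a * ∑ c ∈ T, x c + b * ∑ c ∈ T, y c := by
    intro T
    simp only [Pi.add_apply, Pi.smul_apply, smul_eq_mul, mul_sum]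
    rw [sum_add_distrib]
  refine ⟨⟨fun T hT => ?_, ?_⟩, fun A hA => ?_⟩
  · rw [hsum T]
    calc v T = a * v T + b * v T := by rw [← add_mul, hab, one_mul]
      _ ≤ _ := add_le_add (mul_le_mul_of_nonneg_left (hx1 T hT) ha)
          (mul_le_mul_of_nonneg_left (hy1 T hT) hb)
  · rw [hsum Finset.univ, hx2, hy2, ← add_mul, hab, one_mul]
  · rw [hsum A, hx3 A hA, hy3 A hA, ← add_mul, hab, one_mul]

end Aux

/-- if `𝒩` is a nested collection of downsets (all ≠ `N`) and `v` is a convex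
game on `O(N)`, then every restricted marginal vector belongs to the restricted core;
consequently `W_𝒩(v) ⊆ C_𝒩(v)`. -/
theorem restrictedMarginal_mem_restrictedCore_of_convex
    [Fintype ι] [DecidableEq ι] [PartialOrder ι] (𝒩 : Finset (Finset ι))
    (hdown : DownsetCollection 𝒩) (hnested : Nested 𝒩)
    (v : Finset ι → ℝ) (hv : v ∅ = 0)
    (hconv : ∀ S T : Finset ι, IsDownset S → IsDownset T →
      v S + v T ≤ v (S ∪ T) + v (S ∩ T)) :
    (∀ S : ℕ → Finset ι, RestrictedChain 𝒩 S → marginal v S ∈ restrictedCore 𝒩 v) ∧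
      restrictedWeber 𝒩 v ⊆ restrictedCore 𝒩 v := by
  have main : ∀ S : ℕ → Finset ι, RestrictedChain 𝒩 S →
      marginal v S ∈ restrictedCore 𝒩 v := by
    intro S hRS
    obtain ⟨hS, hN⟩ := hRS
    refine ⟨⟨fun T hT => chain_core_ineq v hv hconv hS hT, ?_⟩, ?_⟩
    · have := chain_sum v hv hS (Fintype.card ι) le_rfl
      rwa [chain_top hS le_rfl] at this
    · intro A hA
      obtain ⟨k, hk⟩ := hN A hA
      have hkn : k ≤ Fintype.card ι := by
        by_contra h
        push_neg at h
        exact (hdown A hA).2 (hk ▸ chain_top hS h.le)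
      rw [← hk]
      exact chain_sum v hv hS k hkn
  refine ⟨main, convexHull_min ?_ (restrictedCore_convex 𝒩 v)⟩
  rintro x ⟨S, hS, rfl⟩
  exact main S hS
end
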